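/- Let E be a compact metric space, Ω = E^ℕ, p a fully supported Borel probability measure on E, f ∈ C(Ω), L_f the Ruelle operator, P(f) the pressure, and λ_f = exp(P(f)). Suppose there exists a Baire-class-one function ψ : Ω → ℝ (a pointwise limit of a sequence of continuous functions) and constants 0 < m ≤ M < ∞ with m ≤ ψ(x) ≤ M for all x ∈ Ω, such that ∫_E exp(f(a·x)) ψ(a·x) dp(a) = λ_f ψ(x) for every x ∈ Ω. Then there exists a nonzero positive element ξ ∈ C(Ω)** (positive meaning ξ(g) ≥ 0 for every g ∈ C(Ω)* with g(φ) ≥ 0 whenever φ ≥ 0 pointwise) such that L_f** ξ = λ_f ξ. -/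

import Mathlib

open MeasureTheory Filter Topology NormedSpace

noncomputable section

/-- The sequence `(a, x₁, x₂, …)` obtained by prepending `a` to `x`. -/
def cons {E : Type*} (a : E) (x : ℕ → E) : ℕ → E := fun n => Nat.casesOn n a x

lemma continuous_cons {E : Type*} [TopologicalSpace E] (x : ℕ → E) :
    Continuous fun a : E => cons a x := by
  apply continuous_pi
  intro n
  cases n with
  | zero => exact continuous_id
  | succ k => exact continuous_const

lemma integrable_of_bound {E : Type*} [MeasurableSpace E] {p : Measure E}
    [IsProbabilityMeasure p] {h : E → ℝ} (hmeas : AEStronglyMeasurable h p) (C : ℝ)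
    (hb : ∀ a, |h a| ≤ C) : Integrable h p :=
  (integrable_const C).mono' hmeas (Eventually.of_forall fun a => by
    rw [Real.norm_eq_abs]; exact hb a)

set_option maxHeartbeats 800000 in
/-- If there is a bounded Baire-class-one eigenfunction `ψ`
(with `0 < m ≤ ψ ≤ M`) of the Ruelle operator associated to `λ_f = exp(P(f))`, then the
double transpose `L_f**` has a nonzero positive eigenvector associated to `λ_f`. -/
theorem exists_positive_eigenvector_double_transpose
    {E : Type*} [MetricSpace E] [CompactSpace E] [MeasurableSpace E] [BorelSpace E]
    (p : Measure E) [IsProbabilityMeasure p]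
    (hp : ∀ U : Set E, IsOpen U → U.Nonempty → 0 < p U)
    (f : C(ℕ → E, ℝ))
    (T : C(ℕ → E, ℝ) →L[ℝ] C(ℕ → E, ℝ))
    (hT : ∀ (φ : C(ℕ → E, ℝ)) (x : ℕ → E),
      T φ x = ∫ a, Real.exp (f (cons a x)) * φ (cons a x) ∂p)
    (P : ℝ)
    (hP : TendstoUniformly (fun (n : ℕ) (x : ℕ → E) => Real.log ((T ^ n) 1 x) / n)
      (fun _ => P) atTop)
    (ψ : (ℕ → E) → ℝ)
    (hBaire : ∃ u : ℕ → C(ℕ → E, ℝ), ∀ x, Tendsto (fun n => u n x) atTop (nhds (ψ x)))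
    (m M : ℝ) (hm : 0 < m) (hmM : m ≤ M)
    (hbounds : ∀ x, m ≤ ψ x ∧ ψ x ≤ M)
    (heig : ∀ x : ℕ → E,
      ∫ a, Real.exp (f (cons a x)) * ψ (cons a x) ∂p = Real.exp P * ψ x) :
    ∃ ξ : StrongDual ℝ (StrongDual ℝ C(ℕ → E, ℝ)), ξ ≠ 0 ∧
      (∀ g : StrongDual ℝ C(ℕ → E, ℝ), (∀ φ : C(ℕ → E, ℝ), 0 ≤ φ → 0 ≤ g φ) → 0 ≤ ξ g) ∧
      (∀ g : StrongDual ℝ C(ℕ → E, ℝ), ξ (g.comp T) = Real.exp P * ξ g) := by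
  classical
  set lam : ℝ := Real.exp P with hlamdef
  have hlam : 0 < lam := Real.exp_pos P
  have hM : 0 < M := lt_of_lt_of_le hm hmM
  -- E is nonempty
  have hEne : Nonempty E := by
    by_contra h
    rw [not_nonempty_iff] at h
    have h1 : p Set.univ = 1 := measure_univ
    rw [Set.univ_eq_empty_iff.mpr h, measure_empty] at h1
    exact one_ne_zero h1.symm
  have hΩne : Nonempty (ℕ → E) := ⟨fun _ => Classical.arbitrary E⟩
  -- measurability of ψ along fibers
  obtain ⟨u, hu⟩ := hBaire
  have hψmeas : ∀ x : ℕ → E, Measurable fun a : E => ψ (cons a x) := by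
    intro x
    exact measurable_of_tendsto_metrizable
      (fun n => ((u n).continuous.comp (continuous_cons x)).measurable)
      (tendsto_pi_nhds.mpr fun a => hu (cons a x))
  have hψint : ∀ x : ℕ → E,
      Integrable (fun a : E => Real.exp (f (cons a x)) * ψ (cons a x)) p := by
    intro x
    refine integrable_of_bound
      ((Real.measurable_exp.comp ((f.continuous.comp (continuous_cons x)).measurable)).mul
        (hψmeas x)).aestronglyMeasurable (Real.exp ‖f‖ * M) fun a => ?_
    rw [abs_mul, abs_of_pos (Real.exp_pos _),
      abs_of_pos (lt_of_lt_of_le hm (hbounds _).1)]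
    exact mul_le_mul (Real.exp_le_exp.mpr ((le_abs_self _).trans
      (f.norm_coe_le_norm _))) (hbounds _).2 (lt_of_lt_of_le hm (hbounds _).1).le
      (Real.exp_pos _).le
  have hcontint : ∀ (φ : C(ℕ → E, ℝ)) (x : ℕ → E),
      Integrable (fun a : E => Real.exp (f (cons a x)) * φ (cons a x)) p := by
    intro φ x
    refine integrable_of_bound
      (((Real.continuous_exp.comp (f.continuous.comp (continuous_cons x))).mul
        (φ.continuous.comp (continuous_cons x))).measurable).aestronglyMeasurable
      (Real.exp ‖f‖ * ‖φ‖) fun a => ?_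
    rw [abs_mul, abs_of_pos (Real.exp_pos _)]
    exact mul_le_mul (Real.exp_le_exp.mpr ((le_abs_self _).trans
      (f.norm_coe_le_norm _))) (φ.norm_coe_le_norm _) (abs_nonneg _) (Real.exp_pos _).le
  -- key two-sided bound on iterates
  have key : ∀ n : ℕ, ∀ x : ℕ → E,
      lam ^ n * (ψ x / M) ≤ (T ^ n) 1 x ∧ (T ^ n) 1 x ≤ lam ^ n * (ψ x / m) := by
    intro n
    induction n with
    | zero =>
      intro x
      simp only [pow_zero, one_mul, ContinuousLinearMap.one_apply, ContinuousMap.one_apply]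
      constructor
      · exact (div_le_one hM).mpr (hbounds x).2
      · exact (one_le_div hm).mpr (hbounds x).1
    | succ n ih =>
      intro x
      have hrw : ((T ^ (n + 1)) 1) x
          = ∫ a, Real.exp (f (cons a x)) * ((T ^ n) 1) (cons a x) ∂p := by
        rw [pow_succ']
        rw [ContinuousLinearMap.mul_apply]
        exact hT _ x
      constructor
      · rw [hrw]
        have hle : (fun a : E => (lam ^ n / M) * (Real.exp (f (cons a x)) * ψ (cons a x)))
            ≤ fun a : E => Real.exp (f (cons a x)) * ((T ^ n) 1) (cons a x) := by
          intro a
          have := (ih (cons a x)).1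
          have h2 : Real.exp (f (cons a x)) * (lam ^ n * (ψ (cons a x) / M))
              ≤ Real.exp (f (cons a x)) * ((T ^ n) 1) (cons a x) :=
            mul_le_mul_of_nonneg_left this (Real.exp_pos _).le
          calc (lam ^ n / M) * (Real.exp (f (cons a x)) * ψ (cons a x))
              = Real.exp (f (cons a x)) * (lam ^ n * (ψ (cons a x) / M)) := by ring
            _ ≤ _ := h2
        have := integral_mono (((hψint x).const_mul (lam ^ n / M))) (hcontint _ x) hle
        rw [integral_const_mul, heig x] at this
        calc lam ^ (n + 1) * (ψ x / M) = lam ^ n / M * (lam * ψ x) := by rw [pow_succ]; ring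
          _ ≤ _ := this
      · rw [hrw]
        have hle : (fun a : E => Real.exp (f (cons a x)) * ((T ^ n) 1) (cons a x))
            ≤ fun a : E => (lam ^ n / m) * (Real.exp (f (cons a x)) * ψ (cons a x)) := by
          intro a
          have := (ih (cons a x)).2
          have h2 : Real.exp (f (cons a x)) * ((T ^ n) 1) (cons a x)
              ≤ Real.exp (f (cons a x)) * (lam ^ n * (ψ (cons a x) / m)) :=
            mul_le_mul_of_nonneg_left this (Real.exp_pos _).le
          calc Real.exp (f (cons a x)) * ((T ^ n) 1) (cons a x) ≤ _ := h2
            _ = (lam ^ n / m) * (Real.exp (f (cons a x)) * ψ (cons a x)) := by ring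
        have := integral_mono (hcontint _ x) ((hψint x).const_mul (lam ^ n / m)) hle
        rw [integral_const_mul, heig x] at this
        calc ∫ a, Real.exp (f (cons a x)) * ((T ^ n) 1) (cons a x) ∂p
            ≤ lam ^ n / m * (lam * ψ x) := this
          _ = lam ^ (n + 1) * (ψ x / m) := by rw [pow_succ]; ring
  -- consequences of the key bound
  have hTn_pos : ∀ n : ℕ, ∀ x : ℕ → E, lam ^ n * (m / M) ≤ (T ^ n) 1 x := by
    intro n x
    calc lam ^ n * (m / M) ≤ lam ^ n * (ψ x / M) := by
          apply mul_le_mul_of_nonneg_left _ (pow_pos hlam n).le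
          exact div_le_div_of_nonneg_right (hbounds x).1 hM.le
      _ ≤ _ := (key n x).1
  have hTn_le : ∀ n : ℕ, ∀ x : ℕ → E, (T ^ n) 1 x ≤ lam ^ n * (M / m) := by
    intro n x
    calc (T ^ n) 1 x ≤ lam ^ n * (ψ x / m) := (key n x).2
      _ ≤ lam ^ n * (M / m) := by
          apply mul_le_mul_of_nonneg_left _ (pow_pos hlam n).le
          exact div_le_div_of_nonneg_right (hbounds x).2 hm.le
  have hTn_abs : ∀ n : ℕ, ∀ x : ℕ → E, |(T ^ n) 1 x| ≤ lam ^ n * (M / m) := by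
    intro n x
    rw [abs_of_nonneg]
    · exact hTn_le n x
    · exact le_trans (by positivity) (hTn_pos n x)
  -- the sequences
  set b : StrongDual ℝ C(ℕ → E, ℝ) → ℕ → ℝ :=
    fun g k => (lam ^ k)⁻¹ * g ((T ^ k) 1) with hbdef
  set A : StrongDual ℝ C(ℕ → E, ℝ) → ℕ → ℝ :=
    fun g n => (n : ℝ)⁻¹ * ∑ k ∈ Finset.range n, b g k with hAdef
  have hbabs : ∀ g : StrongDual ℝ C(ℕ → E, ℝ), ∀ k, |b g k| ≤ ‖g‖ * (M / m) := by
    intro g k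
    have h1 : ‖g ((T ^ k) 1)‖ ≤ ‖g‖ * ‖((T ^ k) 1 : C(ℕ → E, ℝ))‖ := g.le_opNorm _
    have h2 : ‖((T ^ k) 1 : C(ℕ → E, ℝ))‖ ≤ lam ^ k * (M / m) :=
      ContinuousMap.norm_le _ (by positivity) |>.mpr fun x => by
        rw [Real.norm_eq_abs]; exact hTn_abs k x
    rw [hbdef, abs_mul, abs_of_pos (inv_pos.mpr (pow_pos hlam k))]
    calc (lam ^ k)⁻¹ * |g ((T ^ k) 1)| ≤ (lam ^ k)⁻¹ * (‖g‖ * (lam ^ k * (M / m))) := by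
          apply mul_le_mul_of_nonneg_left _ (by positivity)
          exact h1.trans (mul_le_mul_of_nonneg_left h2 (norm_nonneg g))
      _ = ‖g‖ * (M / m) := by field_simp
  have hAabs : ∀ g : StrongDual ℝ C(ℕ → E, ℝ), ∀ n, |A g n| ≤ ‖g‖ * (M / m) := by
    intro g n
    rcases Nat.eq_zero_or_pos n with h | h
    · subst h; simp [hAdef]; positivity
    · rw [hAdef]
      simp only
      rw [abs_mul, abs_of_pos (inv_pos.mpr (by exact_mod_cast h : (0:ℝ) < n))]
      calc (n : ℝ)⁻¹ * |∑ k ∈ Finset.range n, b g k|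
          ≤ (n : ℝ)⁻¹ * ∑ k ∈ Finset.range n, |b g k| := by
            apply mul_le_mul_of_nonneg_left (Finset.abs_sum_le_sum_abs _ _) (by positivity)
        _ ≤ (n : ℝ)⁻¹ * (n * (‖g‖ * (M / m))) := by
            apply mul_le_mul_of_nonneg_left _ (by positivity)
            calc ∑ k ∈ Finset.range n, |b g k| ≤ ∑ _k ∈ Finset.range n, ‖g‖ * (M / m) :=
                  Finset.sum_le_sum fun k _ => hbabs g k
              _ = n * (‖g‖ * (M / m)) := by simp [Finset.sum_const, mul_comm]
        _ = ‖g‖ * (M / m) := by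
            field_simp
  -- the ultrafilter and the limit functional
  set U : Ultrafilter ℕ := Ultrafilter.of atTop with hUdef
  have hUle : (U : Filter ℕ) ≤ atTop := Ultrafilter.of_le atTop
  have hex : ∀ g : StrongDual ℝ C(ℕ → E, ℝ), ∃ L : ℝ, Tendsto (A g) U (nhds L) := by
    intro g
    have hK : IsCompact (Set.Icc (-(‖g‖ * (M / m))) (‖g‖ * (M / m))) := isCompact_Icc
    have hmem : (U.map (A g) : Filter ℝ)
        ≤ Filter.principal (Set.Icc (-(‖g‖ * (M / m))) (‖g‖ * (M / m))) := by
      rw [Filter.le_principal_iff]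
      rw [Ultrafilter.mem_coe, Ultrafilter.mem_map]
      apply Filter.mem_of_superset Filter.univ_mem
      intro n _
      exact abs_le.mp (hAabs g n)
    obtain ⟨L, _, hL⟩ := hK.ultrafilter_le_nhds (U.map (A g)) hmem
    exact ⟨L, hL⟩
  set L : StrongDual ℝ C(ℕ → E, ℝ) → ℝ := fun g => (hex g).choose with hLdef
  have hL : ∀ g, Tendsto (A g) U (nhds (L g)) := fun g => (hex g).choose_spec
  -- linearity
  have hLadd : ∀ g g' : StrongDual ℝ C(ℕ → E, ℝ), L (g + g') = L g + L g' := by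
    intro g g'
    have h1 : Tendsto (A (g + g')) U (nhds (L g + L g')) := by
      have : A (g + g') = fun n => A g n + A g' n := by
        funext n
        simp only [hAdef, hbdef, ContinuousLinearMap.add_apply]
        have hs : ∑ k ∈ Finset.range n, (lam ^ k)⁻¹ * (g ((T ^ k) 1) + g' ((T ^ k) 1))
            = (∑ k ∈ Finset.range n, (lam ^ k)⁻¹ * g ((T ^ k) 1))
              + ∑ k ∈ Finset.range n, (lam ^ k)⁻¹ * g' ((T ^ k) 1) := by
          rw [← Finset.sum_add_distrib]
          exact Finset.sum_congr rfl fun k _ => by ring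
        rw [hs]
        ring
      rw [this]
      exact (hL g).add (hL g')
    exact tendsto_nhds_unique (hL (g + g')) h1
  have hLsmul : ∀ (c : ℝ) (g : StrongDual ℝ C(ℕ → E, ℝ)), L (c • g) = c * L g := by
    intro c g
    have h1 : Tendsto (A (c • g)) U (nhds (c * L g)) := by
      have : A (c • g) = fun n => c * A g n := by
        funext n
        simp only [hAdef, hbdef, ContinuousLinearMap.smul_apply, smul_eq_mul]
        have hs : ∑ k ∈ Finset.range n, (lam ^ k)⁻¹ * (c * g ((T ^ k) 1))
            = c * ∑ k ∈ Finset.range n, (lam ^ k)⁻¹ * g ((T ^ k) 1) := by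
          rw [Finset.mul_sum]
          exact Finset.sum_congr rfl fun k _ => by ring
        rw [hs]
        ring
      rw [this]
      exact (hL g).const_mul c
    exact tendsto_nhds_unique (hL (c • g)) h1
  have hLbound : ∀ g : StrongDual ℝ C(ℕ → E, ℝ), ‖L g‖ ≤ (M / m) * ‖g‖ := by
    intro g
    have : L g ∈ Set.Icc (-(‖g‖ * (M / m))) (‖g‖ * (M / m)) :=
      isClosed_Icc.mem_of_tendsto (hL g)
        (Filter.Eventually.of_forall fun n => abs_le.mp (hAabs g n))
    rw [Real.norm_eq_abs, abs_le]
    constructor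
    · calc -((M / m) * ‖g‖) = -(‖g‖ * (M / m)) := by ring
        _ ≤ L g := this.1
    · calc L g ≤ ‖g‖ * (M / m) := this.2
        _ = (M / m) * ‖g‖ := by ring
  set ξ : StrongDual ℝ (StrongDual ℝ C(ℕ → E, ℝ)) :=
    ⟨{ toFun := L
       map_add' := hLadd
       map_smul' := hLsmul }, AddMonoidHomClass.continuous_of_bound
        ({ toFun := L, map_add' := hLadd, map_smul' := hLsmul } :
          StrongDual ℝ C(ℕ → E, ℝ) →ₗ[ℝ] ℝ) (M / m) hLbound⟩
      with hξdef
  have hξapp : ∀ g, ξ g = L g := fun g => rfl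
  -- positivity
  have hLpos : ∀ g : StrongDual ℝ C(ℕ → E, ℝ), (∀ φ : C(ℕ → E, ℝ), 0 ≤ φ → 0 ≤ g φ) → 0 ≤ L g := by
    intro g hg
    have hb0 : ∀ k, 0 ≤ b g k := by
      intro k
      apply mul_nonneg (by positivity)
      apply hg
      rw [ContinuousMap.le_def]
      intro x
      exact le_trans (by positivity) (hTn_pos k x)
    have hA0 : ∀ n, 0 ≤ A g n :=
      fun n => mul_nonneg (by positivity) (Finset.sum_nonneg fun k _ => hb0 k)
    exact ge_of_tendsto (hL g) (Filter.Eventually.of_forall hA0)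
  -- nonzero
  have hξne : ξ ≠ 0 := by
    set g0 : StrongDual ℝ C(ℕ → E, ℝ) := ContinuousMap.evalCLM ℝ (Classical.arbitrary (ℕ → E))
      with hg0def
    have hb0 : ∀ k, m / M ≤ b g0 k := by
      intro k
      have : lam ^ k * (m / M) ≤ (T ^ k) 1 (Classical.arbitrary (ℕ → E)) := hTn_pos k _
      have h2 : (lam ^ k)⁻¹ * (lam ^ k * (m / M)) ≤ (lam ^ k)⁻¹ * ((T ^ k) 1
          (Classical.arbitrary (ℕ → E))) := mul_le_mul_of_nonneg_left this (by positivity)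
      rw [← mul_assoc, inv_mul_cancel₀ (by positivity), one_mul] at h2
      exact h2
    have hA0 : ∀ n, 1 ≤ n → m / M ≤ A g0 n := by
      intro n hn
      have hn' : (0:ℝ) < n := by exact_mod_cast hn
      have hsum : (n : ℝ) * (m / M) ≤ ∑ k ∈ Finset.range n, b g0 k := by
        calc (n : ℝ) * (m / M) = ∑ _k ∈ Finset.range n, m / M := by
              simp [Finset.sum_const, mul_comm]
          _ ≤ ∑ k ∈ Finset.range n, b g0 k := Finset.sum_le_sum fun k _ => hb0 k
      have h2 := mul_le_mul_of_nonneg_left hsum (inv_nonneg.mpr hn'.le)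
      rw [← mul_assoc, inv_mul_cancel₀ (ne_of_gt hn'), one_mul] at h2
      exact h2
    have hge : m / M ≤ L g0 := by
      apply ge_of_tendsto (hL g0)
      apply Filter.mem_of_superset (hUle (Filter.mem_atTop 1))
      intro n hn
      exact hA0 n hn
    intro hcontra
    have : ξ g0 = 0 := by rw [hcontra]; rfl
    rw [hξapp] at this
    have : (0:ℝ) < m / M := by positivity
    linarith [hge, ‹L g0 = 0›]
  -- the eigenvalue equation
  have hLeig : ∀ g : StrongDual ℝ C(ℕ → E, ℝ), L (g.comp T) = lam * L g := by
    intro g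
    -- A (g.comp T) n = lam * (A g n + n⁻¹ * (b g n - b g 0))
    have hAT : ∀ n, A (g.comp T) n
        = lam * (A g n + (n : ℝ)⁻¹ * (b g n - b g 0)) := by
      intro n
      have hb' : ∀ k, b (g.comp T) k = lam * b g (k + 1) := by
        intro k
        simp only [hbdef, ContinuousLinearMap.comp_apply]
        have h1 : T ((T ^ k) 1) = (T ^ (k + 1)) 1 := by
          rw [pow_succ', ContinuousLinearMap.mul_apply]
        rw [h1, pow_succ]
        field_simp
        ring
      have hsum : ∑ k ∈ Finset.range n, b g (k + 1)
          = (∑ k ∈ Finset.range n, b g k) + b g n - b g 0 := by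
        have h1 := Finset.sum_range_succ (b g) n
        have h2 := Finset.sum_range_succ' (b g) n
        -- h1 : ∑_{k<n+1} = ∑_{k<n} + b n ; h2 : ∑_{k<n+1} = ∑_{k<n} b(k+1) + b 0
        rw [h1] at h2
        linarith [h2]
      simp only [hAdef]
      rw [Finset.sum_congr rfl fun k _ => hb' k, ← Finset.mul_sum, hsum]
      ring
    have h1 : Tendsto (fun n : ℕ => (n : ℝ)⁻¹ * (b g n - b g 0)) atTop (nhds 0) := by
      have hbound : ∀ n : ℕ, ‖(n : ℝ)⁻¹ * (b g n - b g 0)‖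
          ≤ 2 * (‖g‖ * (M / m)) * (n : ℝ)⁻¹ := by
        intro n
        rw [Real.norm_eq_abs, abs_mul, abs_of_nonneg (inv_nonneg.mpr (Nat.cast_nonneg n)),
          mul_comm]
        apply mul_le_mul_of_nonneg_right _ (inv_nonneg.mpr (Nat.cast_nonneg n) : (0:ℝ) ≤ ((n:ℝ))⁻¹)
        calc |b g n - b g 0| = |b g n + -(b g 0)| := by rw [sub_eq_add_neg]
          _ ≤ |b g n| + |-(b g 0)| := abs_add_le _ _
          _ = |b g n| + |b g 0| := by rw [abs_neg]
          _ ≤ ‖g‖ * (M / m) + ‖g‖ * (M / m) := add_le_add (hbabs g n) (hbabs g 0)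
          _ = 2 * (‖g‖ * (M / m)) := by ring
      have hzero : Tendsto (fun n : ℕ => 2 * (‖g‖ * (M / m)) * (n : ℝ)⁻¹) atTop (nhds 0) := by
        have h0 : Tendsto (fun n : ℕ => ((n : ℝ))⁻¹) atTop (nhds 0) :=
          tendsto_inv_atTop_zero.comp tendsto_natCast_atTop_atTop
        have h2 := h0.const_mul (2 * (‖g‖ * (M / m)))
        simpa using h2
      exact squeeze_zero_norm hbound hzero
    have h2 : Tendsto (A (g.comp T)) U (nhds (lam * (L g + 0))) := by
      rw [funext hAT]
      exact (((hL g).add (h1.mono_left hUle)).const_mul lam)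
    rw [add_zero] at h2
    exact tendsto_nhds_unique (hL (g.comp T)) h2
  refine ⟨ξ, hξne, ?_, ?_⟩
  · intro g hg
    rw [hξapp]
    exact hLpos g hg
  · intro g
    rw [hξapp, hξapp]
    exact hLeig g
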